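/- Equivariant Pieri–type expansion at fixed points: for all u, v, x ∈ I(d,n), E(u,x) · E(v,x) = Σ_{w ∈ I(d,n)} c_{uv}^w · E(w,x) in K, where for w ≤ u and w ≤ v one sets c_{uv}^w := Σ_{w = y_0 < y_1 < … < y_k} (−1)^k · (E(u,y_k) E(v,y_k) / E(y_k,y_k)) · ∏_{t=1}^{k} (E(y_t, y_{t−1}) / E(y_{t−1}, y_{t−1})), the sum being over all strictly increasing chains w = y_0 < y_1 < … < y_k (k ≥ 0) in I(d,n) with y_k ≤ u and y_k ≤ v, and c_{uv}^w := 0 if not both w ≤ u and w ≤ v. -/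

import Mathlib

noncomputable section

/-- The variable `ε_j` of the polynomial ring `ℤ[ε_1, …, ε_n]` (junk value `0`
for `j` outside `{1, …, n}`). -/
def eps (n j : ℕ) : MvPolynomial (Fin n) ℤ :=
  if h : 1 ≤ j ∧ j ≤ n then MvPolynomial.X ⟨j - 1, by omega⟩ else 0

/-- `mu n k r p` is `μ_r^k(p) = ∏_{j=k}^{r} (ε_j − ε_p)`, the empty product
(when `k > r`) being `1`. -/
def mu (n k r p : ℕ) : MvPolynomial (Fin n) ℤ :=
  ∏ j ∈ Finset.Icc k r, (eps n j - eps n p)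

/-- The Vandermonde product `VDM(v) = ∏_{1 ≤ i < j ≤ d} (ε_{v_j} − ε_{v_i})`. -/
def vdm (n d : ℕ) (v : Fin d → ℕ) : MvPolynomial (Fin n) ℤ :=
  ∏ p ∈ Finset.univ.filter (fun p : Fin d × Fin d => p.1 < p.2),
    (eps n (v p.2) - eps n (v p.1))

/-- `D(u,v)`: the determinant of the `d×d` matrix whose `(i,j)`-entry is `μ_n^{u_i+1}(v_j)`. -/
def Ddet (n d : ℕ) (u v : Fin d → ℕ) : MvPolynomial (Fin n) ℤ :=
  Matrix.det (Matrix.of fun i j : Fin d => mu n (u i + 1) n (v j))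

/-- `E(u,v) = D(u,v)/VDM(v)`, an element of the fraction field `K` of
`R = ℤ[ε_1, …, ε_n]`. -/
def Efn (n d : ℕ) (u v : Fin d → ℕ) : FractionRing (MvPolynomial (Fin n) ℤ) :=
  algebraMap (MvPolynomial (Fin n) ℤ) (FractionRing (MvPolynomial (Fin n) ℤ)) (Ddet n d u v)
    / algebraMap (MvPolynomial (Fin n) ℤ) (FractionRing (MvPolynomial (Fin n) ℤ)) (vdm n d v)

attribute [local instance] Classical.propDecidable

/-- The set `I(d,n)` of strictly increasing `d`-tuples of integers from `{1, …, n}`,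
encoded with values in `Fin (n+1)` (via the natural-number values of the entries). -/
def Idn (d n : ℕ) : Type :=
  {w : Fin d → Fin (n + 1) // StrictMono w ∧ ∀ i, 1 ≤ (w i : ℕ)}

noncomputable instance (d n : ℕ) : Fintype (Idn d n) := by
  unfold Idn; infer_instance

/-- The componentwise partial order on `I(d,n)`: `a ≤ b` iff `a_i ≤ b_i` for all `i`. -/
def leI {d n : ℕ} (a b : Idn d n) : Prop := ∀ i, (a.1 i : ℕ) ≤ (b.1 i : ℕ)

/-- `E(u,v) = D(u,v)/VDM(v) ∈ K` for `u, v ∈ I(d,n)`. -/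
def EI {d n : ℕ} (a b : Idn d n) : FractionRing (MvPolynomial (Fin n) ℤ) :=
  Efn n d (fun i => (a.1 i : ℕ)) (fun i => (b.1 i : ℕ))

/-- The set of strictly increasing chains `w = y_0 < y_1 < … < y_k` (`k ≥ 0`) in `I(d,n)`
with `y_k ≤ u` and `y_k ≤ v`, encoded as lists `[y_0, y_1, …, y_k]`. -/
def chainSet {d n : ℕ} (w u v : Idn d n) : Set (List (Idn d n)) :=
  {L | L.head? = some w ∧ L.Chain' (fun a b => leI a b ∧ a ≠ b) ∧
    leI (L.getLast?.getD w) u ∧ leI (L.getLast?.getD w) v}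

/-- The contribution `(−1)^k · (E(u,y_k) E(v,y_k) / E(y_k,y_k)) ·
∏_{t=1}^{k} (E(y_t, y_{t−1}) / E(y_{t−1}, y_{t−1}))` of a chain `[y_0, …, y_k]`. -/
def chainTerm {d n : ℕ} (u v w : Idn d n) (L : List (Idn d n)) :
    FractionRing (MvPolynomial (Fin n) ℤ) :=
  (-1) ^ (L.length - 1)
    * (EI u (L.getLast?.getD w) * EI v (L.getLast?.getD w) / EI (L.getLast?.getD w) (L.getLast?.getD w))
    * ((L.zip L.tail).map (fun p => EI p.2 p.1 / EI p.1 p.1)).prod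

/-- The structure constant `c_{uv}^w`: the sum of `chainTerm` over all chains starting
at `w` and lying below both `u` and `v`, when `w ≤ u` and `w ≤ v`; and `0` otherwise.
(There are only finitely many such chains, the poset `I(d,n)` being finite.) -/
noncomputable def cConst {d n : ℕ} (u v w : Idn d n) :
    FractionRing (MvPolynomial (Fin n) ℤ) :=
  if leI w u ∧ leI w v then ∑ᶠ L ∈ chainSet w u v, chainTerm u v w L else 0

section PieriAux

variable {d n : ℕ}

lemma eps_eq_X {j : ℕ} (h1 : 1 ≤ j) (h2 : j ≤ n) :
    eps n j = MvPolynomial.X (⟨j - 1, by omega⟩ : Fin n) := by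
  rw [eps, dif_pos ⟨h1, h2⟩]

lemma eps_sub_ne_zero {j p : ℕ} (h1 : 1 ≤ j) (h2 : j ≤ n) (h3 : 1 ≤ p) (h4 : p ≤ n)
    (hne : j ≠ p) : eps n j - eps n p ≠ 0 := by
  rw [eps_eq_X h1 h2, eps_eq_X h3 h4]
  refine sub_ne_zero.mpr fun h => hne ?_
  have := congrArg Fin.val (MvPolynomial.X_injective h)
  simp only [] at this
  omega

lemma mu_eq_zero {k p : ℕ} (h1 : k ≤ p) (h2 : p ≤ n) : mu n k n p = 0 := by
  refine Finset.prod_eq_zero (Finset.mem_Icc.mpr ⟨h1, h2⟩) ?_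
  simp

lemma mu_ne_zero {k p : ℕ} (h3 : 1 ≤ p) (hk : p < k) : mu n k n p ≠ 0 := by
  rw [mu, Finset.prod_ne_zero_iff]
  intro j hj
  rw [Finset.mem_Icc] at hj
  exact eps_sub_ne_zero (by omega) hj.2 h3 (by omega) (by omega)

lemma Idn.le_n (a : Idn d n) (i : Fin d) : (a.1 i : ℕ) ≤ n := by
  have := (a.1 i).isLt; omega

lemma Idn.vmono (a : Idn d n) {i j : Fin d} (hij : i ≤ j) : (a.1 i : ℕ) ≤ (a.1 j : ℕ) := by
  rcases eq_or_lt_of_le hij with rfl | h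
  · exact le_rfl
  · exact le_of_lt (a.2.1 h)

lemma Idn.vstrict (a : Idn d n) {i j : Fin d} (hij : i < j) : (a.1 i : ℕ) < (a.1 j : ℕ) :=
  a.2.1 hij

lemma leI_refl (a : Idn d n) : leI a a := fun _ => le_rfl

lemma leI_trans {a b c : Idn d n} (h1 : leI a b) (h2 : leI b c) : leI a c :=
  fun i => le_trans (h1 i) (h2 i)

lemma Idn.ext' {a b : Idn d n} (h : ∀ i, (a.1 i : ℕ) = (b.1 i : ℕ)) : a = b :=
  Subtype.ext (funext fun i => Fin.ext (h i))

lemma leI_antisymm {a b : Idn d n} (h1 : leI a b) (h2 : leI b a) : a = b :=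
  Idn.ext' fun i => le_antisymm (h1 i) (h2 i)

/-- The strict version of `leI`. -/
def ltI (a b : Idn d n) : Prop := leI a b ∧ a ≠ b

lemma ltI_trans {a b c : Idn d n} (h1 : ltI a b) (h2 : ltI b c) : ltI a c := by
  refine ⟨leI_trans h1.1 h2.1, fun hac => ?_⟩
  subst hac
  exact h1.2 (leI_antisymm h1.1 h2.1)

instance : IsTrans (Idn d n) ltI := ⟨fun _ _ _ => ltI_trans⟩

lemma Ddet_eq_zero {a b : Idn d n} (hab : ¬ leI b a) :
    Ddet n d (fun i => (a.1 i : ℕ)) (fun i => (b.1 i : ℕ)) = 0 := by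
  have hab' : ∃ i, (a.1 i : ℕ) < (b.1 i : ℕ) := by
    by_contra hc
    push_neg at hc
    exact hab fun i => hc i
  obtain ⟨i, hi⟩ := hab'
  rw [Ddet, Matrix.det_apply']
  refine Finset.sum_eq_zero fun σ _ => ?_
  have key : ∃ j, (a.1 (σ j) : ℕ) < (b.1 j : ℕ) := by
    by_contra hc
    push_neg at hc
    have hpig : ∃ j, i ≤ j ∧ σ j ≤ i := by
      by_contra hp
      push_neg at hp
      have hcard := Finset.card_le_card_of_injOn σ
        (fun j hj => Finset.mem_Ioi.mpr (hp j (Finset.mem_Ici.mp hj))) σ.injective.injOn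
      rw [Fin.card_Ici, Fin.card_Ioi] at hcard
      have := i.isLt
      omega
    obtain ⟨j, hij, hji⟩ := hpig
    have h1 : (b.1 i : ℕ) ≤ (b.1 j : ℕ) := Idn.vmono b hij
    have h2 : (a.1 (σ j) : ℕ) ≤ (a.1 i : ℕ) := Idn.vmono a hji
    have := hc j
    omega
  obtain ⟨j, hj⟩ := key
  have hz : (Matrix.of fun i j : Fin d =>
      mu n ((a.1 i : ℕ) + 1) n ((b.1 j : ℕ))) (σ j) j = 0 := by
    simp only [Matrix.of_apply]
    exact mu_eq_zero (by omega) (Idn.le_n b j)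
  exact mul_eq_zero_of_right _ (Finset.prod_eq_zero (Finset.mem_univ j) hz)

lemma Ddet_diag_ne_zero (y : Idn d n) :
    Ddet n d (fun i => (y.1 i : ℕ)) (fun i => (y.1 i : ℕ)) ≠ 0 := by
  rw [Ddet, Matrix.det_of_lowerTriangular]
  · rw [Finset.prod_ne_zero_iff]
    intro i _
    simp only [Matrix.of_apply]
    exact mu_ne_zero (y.2.2 i) (Nat.lt_succ_self _)
  · intro i j hij
    have hij' : i < j := hij
    simp only [Matrix.of_apply]
    exact mu_eq_zero (Idn.vstrict y hij') (Idn.le_n y j)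

lemma vdm_ne_zero (y : Idn d n) : vdm n d (fun i => (y.1 i : ℕ)) ≠ 0 := by
  rw [vdm, Finset.prod_ne_zero_iff]
  intro p hp
  rw [Finset.mem_filter] at hp
  exact eps_sub_ne_zero (y.2.2 p.2) (Idn.le_n y p.2) (y.2.2 p.1) (Idn.le_n y p.1)
    (by have := Idn.vstrict y hp.2; omega)

lemma EI_eq_zero {a b : Idn d n} (h : ¬ leI b a) : EI a b = 0 := by
  rw [EI, Efn, Ddet_eq_zero h, map_zero, zero_div]

lemma EI_diag_ne_zero (y : Idn d n) : EI y y ≠ 0 := by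
  rw [EI, Efn]
  apply div_ne_zero
  · rw [Ne, IsFractionRing.to_map_eq_zero_iff]
    exact Ddet_diag_ne_zero y
  · rw [Ne, IsFractionRing.to_map_eq_zero_iff]
    exact vdm_ne_zero y

lemma chain_length_le {L : List (Idn d n)} (h : L.Chain' ltI) :
    L.length ≤ Fintype.card (Idn d n) := by
  have hp : L.Pairwise ltI := List.isChain_iff_pairwise.mp h
  have hnd : L.Nodup := hp.imp fun h => h.2
  exact hnd.length_le_card

lemma chainSet_finite (w u v : Idn d n) : (chainSet w u v).Finite :=
  Set.Finite.subset (List.finite_length_le (Idn d n) (Fintype.card (Idn d n)))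
    (fun _ hL => chain_length_le hL.2.1)

lemma getLast?_getD_eq {L : List (Idn d n)} (hL : L ≠ []) (z z' : Idn d n) :
    L.getLast?.getD z = L.getLast?.getD z' := by
  rw [List.getLast?_eq_getLast hL]; rfl

lemma leI_hd_last {L : List (Idn d n)} {a : Idn d n} (hL : L.head? = some a)
    (h : L.Chain' ltI) (z : Idn d n) : leI a (L.getLast?.getD z) := by
  have hp : L.Pairwise leI := (List.isChain_iff_pairwise.mp h).imp (fun h => h.1)
  cases L with
  | nil => simp at hL
  | cons b t =>
    have hb : b = a := by simpa using hL
    subst hb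
    cases t with
    | nil => simpa using leI_refl b
    | cons c s =>
      have h1 : ∀ e ∈ c :: s, leI b e := (List.pairwise_cons.mp hp).1
      have h2 : (b :: c :: s).getLast?.getD z = (c :: s).getLast (by simp) := by
        rw [List.getLast?_cons_cons, List.getLast?_eq_getLast (l := c :: s) (by simp)]; rfl
      rw [h2]
      exact h1 _ (List.getLast_mem _)

lemma chainTerm_w_irrel (u v : Idn d n) {L : List (Idn d n)} (hL : L ≠ []) (w w' : Idn d n) :
    chainTerm u v w L = chainTerm u v w' L := by
  rw [chainTerm, chainTerm, getLast?_getD_eq hL w w']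

/-- The key cancellation: prepending `x` to a nonempty chain negates its term. -/
lemma chainTerm_cons (u v x : Idn d n) {M : List (Idn d n)} (hM : M ≠ []) (w : Idn d n) :
    chainTerm u v x (x :: M) * EI x x = -(chainTerm u v w M * EI (M.head?.getD x) x) := by
  cases M with
  | nil => simp at hM
  | cons b t =>
    have hxx : EI x x ≠ 0 := EI_diag_ne_zero x
    have hlast : (x :: b :: t).getLast?.getD x = (b :: t).getLast?.getD w := by
      rw [List.getLast?_cons_cons]
      exact getLast?_getD_eq (by simp) x w
    rw [chainTerm, chainTerm, hlast]
    set l := (b :: t).getLast?.getD w with hl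
    set F := EI u l * EI v l / EI l l with hF
    have hzip : ((x :: b :: t).zip (x :: b :: t).tail) = (x, b) :: ((b :: t).zip (b :: t).tail) := by
      simp [List.zip_cons_cons]
    rw [hzip, List.map_cons, List.prod_cons]
    have hlen : (x :: b :: t).length - 1 = ((b :: t).length - 1) + 1 := by simp
    rw [hlen, pow_succ]
    have hhd : (b :: t).head?.getD x = b := rfl
    rw [hhd]
    set P := (((b :: t).zip (b :: t).tail).map fun p => EI p.2 p.1 / EI p.1 p.1).prod with hP
    set m := (b :: t).length - 1 with hm
    have hq : EI b x / EI x x * EI x x = EI b x := div_mul_cancel₀ _ hxx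
    linear_combination ((-1 : FractionRing (MvPolynomial (Fin n) ℤ))^m * (-1) * F * P) * hq

end PieriAux

/-- Equivariant Pieri-type expansion at fixed points: for all `u, v, x ∈ I(d,n)`,
`E(u,x) · E(v,x) = Σ_{w ∈ I(d,n)} c_{uv}^w · E(w,x)` in `K`. -/
theorem pieri_expansion_at_fixed_points (d n : ℕ) (hd : 1 ≤ d) (hdn : d ≤ n)
    (u v x : Idn d n) :
    EI u x * EI v x = ∑ w : Idn d n, cConst u v w * EI w x := by
  classical
  set G : List (Idn d n) → FractionRing (MvPolynomial (Fin n) ℤ) :=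
    fun L => chainTerm u v (L.head?.getD x) L * EI (L.head?.getD x) x with hG
  have cfin : ∀ w : Idn d n, (chainSet w u v).Finite := fun w => chainSet_finite w u v
  -- Step A: rewrite each `cConst u v w * EI w x` as a finset sum of `G`.
  have stepA : ∀ w : Idn d n, cConst u v w * EI w x = ∑ L ∈ (cfin w).toFinset, G L := by
    intro w
    by_cases h : leI w u ∧ leI w v
    · rw [cConst, if_pos h,
        finsum_mem_eq_finite_toFinset_sum (fun L => chainTerm u v w L) (cfin w),
        Finset.sum_mul]
      refine Finset.sum_congr rfl fun L hL => ?_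
      have hmem := (Set.Finite.mem_toFinset (cfin w)).mp hL
      have hh : L.head?.getD x = w := by rw [hmem.1]; rfl
      simp only [hG, hh]
    · rw [cConst, if_neg h, zero_mul]
      symm
      refine Finset.sum_eq_zero fun L hL => absurd ?_ h
      obtain ⟨h1, h2, h3, h4⟩ := (Set.Finite.mem_toFinset (cfin w)).mp hL
      exact ⟨leI_trans (leI_hd_last h1 h2 w) h3, leI_trans (leI_hd_last h1 h2 w) h4⟩
  -- the master finset of chains
  set T : Finset (List (Idn d n)) := Finset.univ.biUnion (fun w => (cfin w).toFinset) with hT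
  have hTmem : ∀ L, L ∈ T ↔ ∃ w, L ∈ chainSet w u v := by
    intro L
    simp [hT, Finset.mem_biUnion, Set.Finite.mem_toFinset]
  have stepB : ∑ w : Idn d n, ∑ L ∈ (cfin w).toFinset, G L = ∑ L ∈ T, G L := by
    refine (Finset.sum_biUnion ?_).symm
    intro w _ w' _ hne
    refine Finset.disjoint_left.mpr fun L hLw hLw' => hne ?_
    have h1 := ((Set.Finite.mem_toFinset _).mp hLw).1
    have h2 := ((Set.Finite.mem_toFinset _).mp hLw').1
    rw [h1] at h2
    exact Option.some.inj h2
  have hne_nil : ∀ L ∈ T, L ≠ [] := by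
    intro L hL hnil
    obtain ⟨w, h1, _⟩ := (hTmem L).mp hL
    rw [hnil] at h1
    simp at h1
  -- the three pieces
  set T0 : Finset (List (Idn d n)) :=
    (T.filter (fun L => L.head?.getD x = x)).filter (fun L => L.length = 1) with hT0def
  set B : Finset (List (Idn d n)) :=
    (T.filter (fun L => L.head?.getD x = x)).filter (fun L => ¬L.length = 1) with hBdef
  set T2 : Finset (List (Idn d n)) := T.filter (fun L => ¬L.head?.getD x = x) with hT2def
  set D : Finset (List (Idn d n)) := T2.filter (fun L => leI x (L.head?.getD x)) with hDdef
  have split1 : ∑ L ∈ T.filter (fun L => L.head?.getD x = x), G L + ∑ L ∈ T2, G L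
      = ∑ L ∈ T, G L := Finset.sum_filter_add_sum_filter_not T _ G
  have split0 : ∑ L ∈ T0, G L + ∑ L ∈ B, G L
      = ∑ L ∈ T.filter (fun L => L.head?.getD x = x), G L :=
    Finset.sum_filter_add_sum_filter_not _ _ G
  have hT2D : ∑ L ∈ D, G L = ∑ L ∈ T2, G L := by
    refine Finset.sum_filter_of_ne fun L hL hGL => ?_
    by_contra hc
    exact hGL (by simp only [hG]; rw [EI_eq_zero hc, mul_zero])
  -- the cancellation of B against D
  have cancel : ∑ L ∈ B, G L = ∑ M ∈ D, -(G M) := by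
    refine Finset.sum_nbij' List.tail (fun M => x :: M) ?_ ?_ ?_ ?_ ?_
    · -- tail maps B into D
      intro L hL
      rw [hBdef, Finset.mem_filter, Finset.mem_filter] at hL
      obtain ⟨⟨hLT, hhd⟩, hlen⟩ := hL
      obtain ⟨w, h1, h2, h3, h4⟩ := (hTmem L).mp hLT
      match L, h1, hlen with
      | a :: b :: s, h1, hlen =>
        have hax : a = x := by simpa using hhd
        have hchain : ltI a b ∧ List.Chain' ltI (b :: s) := List.isChain_cons_cons.mp h2
        have hlast : (a :: b :: s).getLast?.getD w = (b :: s).getLast?.getD b := by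
          rw [List.getLast?_cons_cons]
          exact getLast?_getD_eq (by simp) w b
        show (b :: s) ∈ D
        rw [hDdef, Finset.mem_filter, hT2def, Finset.mem_filter]
        refine ⟨⟨(hTmem _).mpr ⟨b, rfl, hchain.2, ?_, ?_⟩, ?_⟩, ?_⟩
        · rw [← hlast]; exact h3
        · rw [← hlast]; exact h4
        · simp only [List.head?_cons, Option.getD_some]
          intro hbx
          exact hchain.1.2 (hax.trans hbx.symm)
        · simp only [List.head?_cons, Option.getD_some]
          rw [← hax]
          exact hchain.1.1
    · -- cons maps D into B
      intro M hM
      rw [hDdef, Finset.mem_filter, hT2def, Finset.mem_filter] at hM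
      obtain ⟨⟨hMT, hhd⟩, hle⟩ := hM
      obtain ⟨w, h1, h2, h3, h4⟩ := (hTmem M).mp hMT
      match M, h1 with
      | b :: s, h1 =>
        have hbx : ¬ b = x := by simpa using hhd
        have hxb : leI x b := by simpa using hle
        have hlast : (x :: b :: s).getLast?.getD x = (b :: s).getLast?.getD w := by
          rw [List.getLast?_cons_cons]
          exact getLast?_getD_eq (by simp) x w
        rw [hBdef, Finset.mem_filter, Finset.mem_filter]
        refine ⟨⟨(hTmem _).mpr ⟨x, rfl, ?_, ?_, ?_⟩, rfl⟩, by simp⟩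
        · exact List.isChain_cons_cons.mpr ⟨⟨hxb, fun hx2 => hbx hx2.symm⟩, h2⟩
        · rw [hlast]; exact h3
        · rw [hlast]; exact h4
    · -- left inverse
      intro L hL
      rw [hBdef, Finset.mem_filter, Finset.mem_filter] at hL
      obtain ⟨⟨hLT, hhd⟩, _⟩ := hL
      have hne := hne_nil L hLT
      match L, hne with
      | a :: t, _ =>
        have hax : a = x := by simpa using hhd
        rw [hax]
        rfl
    · intro M _; rfl
    · -- the sign relation
      intro L hL
      rw [hBdef, Finset.mem_filter, Finset.mem_filter] at hL
      obtain ⟨⟨hLT, hhd⟩, hlen⟩ := hL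
      match L, hLT, hlen with
      | [], hLT, _ => exact absurd rfl (hne_nil [] hLT)
      | [_], _, hlen => exact absurd rfl hlen
      | a :: b :: s, _, _ =>
        have hax : a = x := by simpa using hhd
        rw [hax]
        simp only [hG, List.tail_cons, List.head?_cons, Option.getD_some]
        have hcc := chainTerm_cons u v x (M := b :: s) (by simp) b
        simp only [List.head?_cons, Option.getD_some] at hcc
        exact hcc
  -- hence the B and D sums cancel
  have hBD : ∑ L ∈ B, G L + ∑ L ∈ D, G L = 0 := by
    rw [cancel, ← Finset.sum_add_distrib]
    simp
  -- evaluate the T0 sum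
  have hT0mem : ∀ L, L ∈ T0 ↔ (leI x u ∧ leI x v) ∧ L = [x] := by
    intro L
    rw [hT0def, Finset.mem_filter, Finset.mem_filter]
    constructor
    · rintro ⟨⟨hLT, hhd⟩, hlen⟩
      obtain ⟨a, rfl⟩ := List.length_eq_one_iff.mp hlen
      have hax : a = x := by simpa using hhd
      subst hax
      obtain ⟨w, h1, h2, h3, h4⟩ := (hTmem _).mp hLT
      have hlast : ([a] : List (Idn d n)).getLast?.getD w = a := by simp
      rw [hlast] at h3 h4
      exact ⟨⟨h3, h4⟩, rfl⟩
    · rintro ⟨⟨hxu, hxv⟩, rfl⟩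
      refine ⟨⟨(hTmem _).mpr ⟨x, rfl, List.isChain_singleton x, ?_, ?_⟩, rfl⟩, rfl⟩
      · simpa using hxu
      · simpa using hxv
  have hGx : G [x] = EI u x * EI v x := by
    simp only [hG, List.head?_cons, Option.getD_some]
    rw [chainTerm]
    simp only [List.length_singleton, Nat.sub_self, pow_zero, List.getLast?_singleton,
      Option.getD_some, List.tail_cons, List.zip_nil_right, List.map_nil, List.prod_nil,
      one_mul, mul_one]
    exact div_mul_cancel₀ _ (EI_diag_ne_zero x)
  have finalT0 : ∑ L ∈ T0, G L = EI u x * EI v x := by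
    by_cases hx : leI x u ∧ leI x v
    · have : T0 = {[x]} := by
        refine Finset.ext fun L => ?_
        rw [hT0mem, Finset.mem_singleton]
        exact ⟨fun h => h.2, fun h => ⟨hx, h⟩⟩
      rw [this, Finset.sum_singleton, hGx]
    · have : T0 = ∅ := by
        refine Finset.ext fun L => ?_
        rw [hT0mem]
        simp only [Finset.notMem_empty, iff_false]
        exact fun h => hx h.1
      rw [this, Finset.sum_empty]
      rcases not_and_or.mp hx with h | h
      · rw [EI_eq_zero h, zero_mul]
      · rw [EI_eq_zero h, mul_zero]
  -- assemble
  calc EI u x * EI v x = ∑ L ∈ T0, G L := finalT0.symm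
    _ = ∑ L ∈ T0, G L + (∑ L ∈ B, G L + ∑ L ∈ D, G L) := by rw [hBD, add_zero]
    _ = (∑ L ∈ T0, G L + ∑ L ∈ B, G L) + ∑ L ∈ T2, G L := by rw [← hT2D]; ring
    _ = ∑ L ∈ T, G L := by rw [split0, split1]
    _ = ∑ w : Idn d n, ∑ L ∈ (cfin w).toFinset, G L := stepB.symm
    _ = ∑ w : Idn d n, cConst u v w * EI w x :=
      Finset.sum_congr rfl fun w _ => (stepA w).symm
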